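/- Let G be a critical graph and let xy be an edge of G. Then the degree of x is at least 2, and d_G(x) + d_G(y) ≥ Δ(G) + 2. -/

import Mathlib

open SimpleGraph

variable {V : Type*}

/-- `c` is a proper edge coloring of `G` using colors `0, …, n-1`:
every edge gets a color `< n`, and distinct edges sharing an endpoint
receive distinct colors. -/
def IsProperEdgeColoring (G : SimpleGraph V) (n : ℕ) (c : Sym2 V → ℕ) : Prop :=
  (∀ e ∈ G.edgeSet, c e < n) ∧
    ∀ e₁ ∈ G.edgeSet, ∀ e₂ ∈ G.edgeSet, e₁ ≠ e₂ → (∃ v, v ∈ e₁ ∧ v ∈ e₂) →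
      c e₁ ≠ c e₂

/-- The edge chromatic number `χ'(G)`: the least number of colors in a proper
edge coloring of `G`. -/
noncomputable def edgeChromaticNumber (G : SimpleGraph V) : ℕ :=
  sInf {n | ∃ c, IsProperEdgeColoring G n c}

/-- The degree `d_G(v)` of a vertex. -/
noncomputable def deg (G : SimpleGraph V) (v : V) : ℕ := (G.neighborSet v).ncard

/-- The maximum vertex degree `Δ(G)`. -/
noncomputable def maxDeg (G : SimpleGraph V) : ℕ := sSup {d | ∃ v, deg G v = d}

/-- `G` is critical: it is class 2 (i.e. `χ'(G) ≠ Δ(G)`) and every proper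
subgraph `H` of `G` satisfies `χ'(H) < χ'(G)`. -/
def IsCritical (G : SimpleGraph V) : Prop :=
  edgeChromaticNumber G ≠ maxDeg G ∧
    ∀ H : G.Subgraph, H ≠ ⊤ → edgeChromaticNumber H.coe < edgeChromaticNumber G

/-- `G` is `k`-critical: critical with maximum degree `k`. -/
def IsKCritical (G : SimpleGraph V) (k : ℕ) : Prop :=
  IsCritical G ∧ maxDeg G = k

private lemma ipec_mono {G : SimpleGraph V} {n m : ℕ} {c : Sym2 V → ℕ}
    (h : IsProperEdgeColoring G n c) (hnm : n ≤ m) : IsProperEdgeColoring G m c :=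
  ⟨fun e he => lt_of_lt_of_le (h.1 e he) hnm, h.2⟩

private lemma colorings_nonempty {W : Type*} [Finite W] (G : SimpleGraph W) :
    {n | ∃ c, IsProperEdgeColoring G n c}.Nonempty := by
  classical
  haveI := Fintype.ofFinite W
  refine ⟨Fintype.card (Sym2 W), fun e => (Fintype.equivFin (Sym2 W) e : ℕ), ?_, ?_⟩
  · intro e _; exact (Fintype.equivFin (Sym2 W) e).isLt
  · intro e₁ _ e₂ _ hne _ h
    exact hne ((Fintype.equivFin (Sym2 W)).injective (Fin.val_injective h))

private lemma deg_le_maxDeg [Fintype V] (G : SimpleGraph V) (v : V) : deg G v ≤ maxDeg G := by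
  apply le_csSup
  · refine ⟨Fintype.card V, ?_⟩
    rintro d ⟨u, rfl⟩
    calc deg G u ≤ (Set.univ : Set V).ncard :=
          Set.ncard_le_ncard (Set.subset_univ _) Set.finite_univ
      _ = Fintype.card V := by rw [Set.ncard_univ, Nat.card_eq_fintype_card]
  · exact ⟨v, rfl⟩

private lemma maxDeg_le_chrom [Fintype V] [Nonempty V] (G : SimpleGraph V) :
    maxDeg G ≤ edgeChromaticNumber G := by
  classical
  obtain ⟨v, hv⟩ : ∃ v, deg G v = maxDeg G := by
    have hbdd : BddAbove {d | ∃ v, deg G v = d} := by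
      refine ⟨Fintype.card V, ?_⟩
      rintro d ⟨u, rfl⟩
      calc deg G u ≤ (Set.univ : Set V).ncard :=
            Set.ncard_le_ncard (Set.subset_univ _) Set.finite_univ
        _ = Fintype.card V := by rw [Set.ncard_univ, Nat.card_eq_fintype_card]
    have hne : {d | ∃ v, deg G v = d}.Nonempty :=
      ⟨deg G (Classical.arbitrary V), Classical.arbitrary V, rfl⟩
    exact Nat.sSup_mem hne hbdd
  obtain ⟨c, hc⟩ := Nat.sInf_mem (colorings_nonempty G)
  rw [← hv]
  have hdeg : deg G v = (G.neighborFinset v).card := by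
    rw [deg, ← Set.ncard_coe_finset, SimpleGraph.coe_neighborFinset]
  rw [hdeg]
  have : (G.neighborFinset v).card ≤ (Finset.range (edgeChromaticNumber G)).card := by
    apply Finset.card_le_card_of_injOn (fun u => c s(v, u))
    · intro u hu
      simp only [Finset.coe_range, Set.mem_Iio]
      exact hc.1 _ (G.mem_edgeSet.mpr ((G.mem_neighborFinset v u).mp hu))
    · intro u₁ hu₁ u₂ hu₂ hcc
      by_contra hne
      refine hc.2 s(v, u₁) (G.mem_edgeSet.mpr ((G.mem_neighborFinset v u₁).mp hu₁))
        s(v, u₂) (G.mem_edgeSet.mpr ((G.mem_neighborFinset v u₂).mp hu₂)) ?_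
        ⟨v, Sym2.mem_mk_left _ _, Sym2.mem_mk_left _ _⟩ hcc
      intro h
      rcases Sym2.eq_iff.mp h with ⟨-, h2⟩ | ⟨h1, -⟩
      · exact hne h2
      · exact (G.ne_of_adj ((G.mem_neighborFinset v u₂).mp hu₂)) h1
  simpa using this

/-- If `G` is critical and `xy ∈ E(G)`, then `d_G(x) ≥ 2` and
`d_G(x) + d_G(y) ≥ Δ(G) + 2`. -/
theorem critical_degree_bounds [Fintype V] (G : SimpleGraph V)
    (hG : IsCritical G) {x y : V} (hxy : G.Adj x y) :
    2 ≤ deg G x ∧ maxDeg G + 2 ≤ deg G x + deg G y := by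
  classical
  have hΔy : deg G y ≤ maxDeg G := deg_le_maxDeg G y
  suffices h : maxDeg G + 2 ≤ deg G x + deg G y by
    exact ⟨by omega, h⟩
  haveI : Nonempty V := ⟨x⟩
  have hge : maxDeg G + 1 ≤ edgeChromaticNumber G := by
    have h1 := maxDeg_le_chrom G
    have h2 := hG.1
    omega
  set k := edgeChromaticNumber G - 1 with hk
  have hχ : edgeChromaticNumber G = k + 1 := by omega
  have hkΔ : maxDeg G ≤ k := by omega
  -- the subgraph with edge xy deleted
  set Hs : G.Subgraph := (⊤ : G.Subgraph).deleteEdges {s(x, y)} with hHsdef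
  have hHsadj : ∀ a b : V, Hs.Adj a b ↔ G.Adj a b ∧ s(a, b) ≠ s(x, y) := by
    intro a b
    rw [hHsdef, SimpleGraph.Subgraph.deleteEdges_adj]
    simp [hxy]
  have hHsne : Hs ≠ ⊤ := by
    intro h
    have : Hs.Adj x y := by rw [h]; simpa using hxy
    rw [hHsadj] at this
    exact this.2 rfl
  have hlt := hG.2 Hs hHsne
  have hle : edgeChromaticNumber Hs.coe ≤ k := by omega
  haveI : Finite ↥Hs.verts := Subtype.finite
  obtain ⟨c₀, hc₀⟩ := Nat.sInf_mem (colorings_nonempty Hs.coe)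
  have hc : IsProperEdgeColoring Hs.coe k c₀ := ipec_mono hc₀ hle
  have hvmem : ∀ v : V, v ∈ Hs.verts := by
    intro v
    rw [hHsdef, SimpleGraph.Subgraph.deleteEdges_verts, SimpleGraph.Subgraph.verts_top]
    exact Set.mem_univ v
  set ι : V → ↥Hs.verts := fun v => ⟨v, hvmem v⟩ with hιdef
  have hι : Function.Injective ι := fun a b h => congrArg Subtype.val h
  set c : Sym2 V → ℕ := fun e => c₀ (e.map ι) with hcdef
  have hcoeadj : ∀ a b : V, Hs.coe.Adj (ι a) (ι b) ↔ (G.Adj a b ∧ s(a, b) ≠ s(x, y)) := by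
    intro a b
    rw [SimpleGraph.Subgraph.coe_adj]
    exact hHsadj a b
  -- edges of G other than xy are edges of Hs.coe
  have hmem : ∀ e ∈ G.edgeSet, e ≠ s(x, y) → (e.map ι) ∈ Hs.coe.edgeSet := by
    intro e
    induction e using Sym2.inductionOn with
    | hf a b =>
      intro he hne
      rw [Sym2.map_pair_eq, SimpleGraph.mem_edgeSet, hcoeadj]
      exact ⟨G.mem_edgeSet.mp he, hne⟩
  have hclt : ∀ e ∈ G.edgeSet, e ≠ s(x, y) → c e < k := by
    intro e he hne
    exact hc.1 _ (hmem e he hne)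
  have hcne : ∀ e₁ ∈ G.edgeSet, ∀ e₂ ∈ G.edgeSet, e₁ ≠ s(x, y) → e₂ ≠ s(x, y) →
      e₁ ≠ e₂ → (∃ v, v ∈ e₁ ∧ v ∈ e₂) → c e₁ ≠ c e₂ := by
    rintro e₁ he₁ e₂ he₂ hn₁ hn₂ hne ⟨v, hv₁, hv₂⟩
    refine hc.2 _ (hmem e₁ he₁ hn₁) _ (hmem e₂ he₂ hn₂) ?_ ?_
    · intro h
      exact hne (Sym2.map.injective hι h)
    · exact ⟨ι v, Sym2.mem_map.mpr ⟨v, hv₁, rfl⟩, Sym2.mem_map.mpr ⟨v, hv₂, rfl⟩⟩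
  -- present color sets
  set Px : Finset ℕ := ((G.neighborFinset x).erase y).image (fun u => c s(x, u)) with hPx
  set Py : Finset ℕ := ((G.neighborFinset y).erase x).image (fun u => c s(y, u)) with hPy
  have hdegx : deg G x = (G.neighborFinset x).card := by
    rw [deg, ← Set.ncard_coe_finset, SimpleGraph.coe_neighborFinset]
  have hdegy : deg G y = (G.neighborFinset y).card := by
    rw [deg, ← Set.ncard_coe_finset, SimpleGraph.coe_neighborFinset]
  have hy_mem : y ∈ G.neighborFinset x := (G.mem_neighborFinset x y).mpr hxy
  have hx_mem : x ∈ G.neighborFinset y := (G.mem_neighborFinset y x).mpr hxy.symm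
  have hPxcard : Px.card ≤ deg G x - 1 := by
    calc Px.card ≤ ((G.neighborFinset x).erase y).card := Finset.card_image_le
      _ = deg G x - 1 := by rw [Finset.card_erase_of_mem hy_mem, hdegx]
  have hPycard : Py.card ≤ deg G y - 1 := by
    calc Py.card ≤ ((G.neighborFinset y).erase x).card := Finset.card_image_le
      _ = deg G y - 1 := by rw [Finset.card_erase_of_mem hx_mem, hdegy]
  have hPxkey : ∀ e ∈ G.edgeSet, x ∈ e → e ≠ s(x, y) → c e ∈ Px := by
    intro e he hxe hne
    obtain ⟨u, rfl⟩ := Sym2.mem_iff_exists.mp hxe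
    have hadj : G.Adj x u := G.mem_edgeSet.mp he
    have hu : u ≠ y := by rintro rfl; exact hne rfl
    exact Finset.mem_image_of_mem _
      (Finset.mem_erase.mpr ⟨hu, (G.mem_neighborFinset x u).mpr hadj⟩)
  have hPykey : ∀ e ∈ G.edgeSet, y ∈ e → e ≠ s(x, y) → c e ∈ Py := by
    intro e he hye hne
    obtain ⟨u, rfl⟩ := Sym2.mem_iff_exists.mp hye
    have hadj : G.Adj y u := G.mem_edgeSet.mp he
    have hu : u ≠ x := by rintro rfl; exact hne (Sym2.eq_swap)
    exact Finset.mem_image_of_mem _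
      (Finset.mem_erase.mpr ⟨hu, (G.mem_neighborFinset y u).mpr hadj⟩)
  set Mx : Finset ℕ := Finset.range k \ Px with hMx
  set My : Finset ℕ := Finset.range k \ Py with hMy
  by_cases hcap : (Mx ∩ My).Nonempty
  · -- extend the coloring: contradiction
    exfalso
    obtain ⟨a, ha⟩ := hcap
    have hax : a ∈ Mx := (Finset.mem_inter.mp ha).1
    have hay : a ∈ My := (Finset.mem_inter.mp ha).2
    have hak : a < k := Finset.mem_range.mp (Finset.mem_sdiff.mp hax).1
    have haPx : a ∉ Px := (Finset.mem_sdiff.mp hax).2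
    have haPy : a ∉ Py := (Finset.mem_sdiff.mp hay).2
    set c' : Sym2 V → ℕ := Function.update c s(x, y) a with hc'
    have hupd : ∀ e, e ≠ s(x, y) → c' e = c e := by
      intro e hne; exact Function.update_of_ne hne _ _
    have hupd2 : c' s(x, y) = a := Function.update_self _ _ _
    have hproper : IsProperEdgeColoring G k c' := by
      constructor
      · intro e he
        by_cases hexy : e = s(x, y)
        · rw [hexy, hupd2]; exact hak
        · rw [hupd e hexy]; exact hclt e he hexy
      · rintro e₁ he₁ e₂ he₂ hne hshare
        by_cases h1 : e₁ = s(x, y)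
        · by_cases h2 : e₂ = s(x, y)
          · exact absurd (h1.trans h2.symm) hne
          · rw [h1, hupd2, hupd e₂ h2]
            obtain ⟨v, hv₁, hv₂⟩ := hshare
            rw [h1] at hv₁
            rcases Sym2.mem_iff.mp hv₁ with rfl | rfl
            · exact fun h => haPx (h ▸ hPxkey e₂ he₂ hv₂ h2)
            · exact fun h => haPy (h ▸ hPykey e₂ he₂ hv₂ h2)
        · by_cases h2 : e₂ = s(x, y)
          · rw [h2, hupd2, hupd e₁ h1]
            obtain ⟨v, hv₁, hv₂⟩ := hshare
            rw [h2] at hv₂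
            rcases Sym2.mem_iff.mp hv₂ with rfl | rfl
            · exact fun h => haPx (h ▸ hPxkey e₁ he₁ hv₁ h1)
            · exact fun h => haPy (h ▸ hPykey e₁ he₁ hv₁ h1)
          · rw [hupd e₁ h1, hupd e₂ h2]
            exact hcne e₁ he₁ e₂ he₂ h1 h2 hne hshare
    have : edgeChromaticNumber G ≤ k := Nat.sInf_le ⟨c', hproper⟩
    omega
  · -- disjoint missing sets: count
    have hdisj : Disjoint Mx My := by
      rw [Finset.disjoint_iff_inter_eq_empty]
      exact Finset.not_nonempty_iff_eq_empty.mp hcap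
    have hMxcard : k ≤ Mx.card + Px.card := by
      have h1 : (Finset.range k).card ≤ (Finset.range k ∪ Px).card :=
        Finset.card_le_card Finset.subset_union_left
      have h2 : Mx.card + Px.card = (Finset.range k ∪ Px).card :=
        Finset.card_sdiff_add_card _ _
      rw [Finset.card_range] at h1
      omega
    have hMycard : k ≤ My.card + Py.card := by
      have h1 : (Finset.range k).card ≤ (Finset.range k ∪ Py).card :=
        Finset.card_le_card Finset.subset_union_left
      have h2 : My.card + Py.card = (Finset.range k ∪ Py).card :=
        Finset.card_sdiff_add_card _ _
      rw [Finset.card_range] at h1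
      omega
    have hunion : Mx.card + My.card ≤ k := by
      have h1 : (Mx ∪ My).card = Mx.card + My.card := Finset.card_union_of_disjoint hdisj
      have h2 : Mx ∪ My ⊆ Finset.range k := by
        apply Finset.union_subset <;> exact Finset.sdiff_subset
      have h3 := Finset.card_le_card h2
      rw [Finset.card_range] at h3
      omega
    have hdx1 : 1 ≤ deg G x := by
      rw [hdegx]
      exact Finset.card_pos.mpr ⟨y, hy_mem⟩
    have hdy1 : 1 ≤ deg G y := by
      rw [hdegy]
      exact Finset.card_pos.mpr ⟨x, hx_mem⟩
    omega
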